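/- Let μ be the sparse measure on 2^ℕ (marginals m_{n_k}({1}) = 2^k/(2^k+1) along the sparse index sequence n_0 = 0, n_{k+1} = n_k + 2^{k·(Σ_{i≤k} i)}, and m_n({1}) = 1/2 otherwise). For x ∈ 2^ℕ with infinitely many 1s, let n_0(x) < n_1(x) < ⋯ enumerate {n : x(n) = 1}, let r(n) = 2^{−k} if n = n_k and r(n) = 1 otherwise, and set C_k(x) = ∏_{i=0}^{k−1} r(n_i(x)). Then for μ-almost every x ∈ 2^ℕ, the series Σ_{k=0}^∞ C_k(x) diverges to +∞; combined with the almost-sure convergence C_k(x) → 0, the Radon–Nikodym cocycle vanishes nonsummably along the forward geodesic of the least-deletion map. -/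

import Mathlib

open MeasureTheory Filter Set ENNReal

/-- `μ` is the product of the marginal measures `m n` on `Bool`. -/
def IsProductMeasure (μ : Measure (ℕ → Bool)) (m : ℕ → Measure Bool) : Prop :=
  ∀ (s : Finset ℕ) (a : ℕ → Bool),
    μ {x | ∀ n ∈ s, x n = a n} = ∏ n ∈ s, m n {a n}

/-- The sparse index sequence: `n₀ = 0` and `n_{k+1} = n_k + 2 ^ (k · Σ_{i ≤ k} i)`. -/
def sparseSeq : ℕ → ℕ
  | 0 => 0
  | k + 1 => sparseSeq k + 2 ^ (k * ∑ i ∈ Finset.range (k + 1), i)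

/-- `p_k = 2 ^ (Σ_{i ≤ k} i)`. -/
def sparseP (k : ℕ) : ℕ := 2 ^ (∑ i ∈ Finset.range (k + 1), i)

/-- The marginals of the sparse measure: `m (n_k) {1} = 2^k/(2^k+1)` along the sparse index
sequence, and `m n {1} = 1/2` for `n` not of the form `n_k`. -/
def IsSparseMarginals (m : ℕ → Measure Bool) : Prop :=
  (∀ k : ℕ, m (sparseSeq k) {true} = (2 ^ k : ℝ≥0∞) / (2 ^ k + 1)) ∧
    ∀ n : ℕ, (∀ k : ℕ, n ≠ sparseSeq k) → m n {true} = 1 / 2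

/-- The multiplicative jump `m n {0} / m n {1}` of the sparse measure: `r (n_k) = 2⁻ᵏ` along the
sparse index sequence and `r n = 1` otherwise. -/
def IsSparseJump (r : ℕ → ℝ≥0∞) : Prop :=
  (∀ k : ℕ, r (sparseSeq k) = ((2 : ℝ≥0∞) ^ k)⁻¹) ∧
    ∀ n : ℕ, (∀ k : ℕ, n ≠ sparseSeq k) → r n = 1

/-- The number of indices `i` with `n_k < i < n_{k+1}` and `x i = 1`. -/
def onesBetween (x : ℕ → Bool) (k : ℕ) : ℕ :=
  ((Finset.Ioo (sparseSeq k) (sparseSeq (k + 1))).filter fun i => x i = true).card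


section Aux

open Finset ENNReal

/-- `Σ_{i ≤ k} i`. -/
def esum (k : ℕ) : ℕ := ∑ i ∈ Finset.range (k + 1), i

def grp (k j : ℕ) : Finset ℕ :=
  Finset.Ico (sparseSeq k + 1 + j * (esum k + k)) (sparseSeq k + 1 + (j + 1) * (esum k + k))

lemma sparseSeq_strictMono : StrictMono sparseSeq := by
  apply strictMono_nat_of_lt_succ
  intro k
  show sparseSeq k < sparseSeq k + 2 ^ _
  exact Nat.lt_add_of_pos_right (pow_pos (by norm_num) _)

lemma k_le_esum (k : ℕ) : k ≤ esum k :=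
  Finset.single_le_sum (f := id) (fun i _ => Nat.zero_le i) (by simp)

lemma esum_ge_three {k : ℕ} (hk : 2 ≤ k) : 3 ≤ esum k := by
  calc 3 = ∑ i ∈ Finset.range 3, i := by decide
  _ ≤ esum k := Finset.sum_le_sum_of_subset (Finset.range_subset_range.2 (by omega))

lemma two_mul_add_one_le_two_pow {e : ℕ} (he : 3 ≤ e) : 2 * e + 1 ≤ 2 ^ e := by
  induction e with
  | zero => omega
  | succ n ih =>
    rcases Nat.lt_or_ge n 3 with h | h
    · interval_cases n <;> simp_all <;> omega
    · have := ih (by omega)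
      have : 2 ^ n ≥ 1 := Nat.one_le_two_pow
      rw [pow_succ]
      omega

lemma geometry {k : ℕ} (hk : 2 ≤ k) :
    sparseSeq k + 1 + 2 ^ esum k * (esum k + k) ≤ sparseSeq (k + 1) := by
  show _ ≤ sparseSeq k + 2 ^ (k * esum k)
  have he3 : 3 ≤ esum k := esum_ge_three hk
  have hke : k ≤ esum k := k_le_esum k
  have h1 : esum k + k + 1 ≤ 2 ^ esum k := by
    have := two_mul_add_one_le_two_pow he3; omega
  have h2 : 2 ^ esum k * (esum k + k) + 1 ≤ 2 ^ esum k * 2 ^ esum k := by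
    calc 2 ^ esum k * (esum k + k) + 1 ≤ 2 ^ esum k * (esum k + k) + 2 ^ esum k :=
          by have : 1 ≤ 2 ^ esum k := Nat.one_le_two_pow; omega
    _ = 2 ^ esum k * (esum k + k + 1) := by ring
    _ ≤ 2 ^ esum k * 2 ^ esum k := Nat.mul_le_mul_left _ h1
  have h3 : 2 ^ esum k * 2 ^ esum k ≤ 2 ^ (k * esum k) := by
    rw [← pow_add]
    exact Nat.pow_le_pow_right (by norm_num) (by nlinarith)
  omega

lemma grp_subset {k j : ℕ} (hk : 2 ≤ k) (hj : j < 2 ^ esum k) :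
    ∀ n ∈ grp k j, sparseSeq k < n ∧ n < sparseSeq (k + 1) := by
  intro n hn
  rw [grp, Finset.mem_Ico] at hn
  have h2 := geometry hk
  have : (j + 1) * (esum k + k) ≤ 2 ^ esum k * (esum k + k) :=
    Nat.mul_le_mul_right _ (by omega)
  omega

lemma not_sparse_of_mem {a l : ℕ} (h1 : sparseSeq a < sparseSeq l)
    (h2 : sparseSeq l < sparseSeq (a + 1)) : False := by
  have := sparseSeq_strictMono.lt_iff_lt.mp h1
  have := sparseSeq_strictMono.lt_iff_lt.mp h2
  omega

-- product lower bound
lemma prod_r_ge {r : ℕ → ℝ≥0∞} (hr : IsSparseJump r) {p : ℕ → Prop} [DecidablePred p]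
    (hinf : (setOf p).Infinite) (k j : ℕ) (hj : j ≤ Nat.count p (sparseSeq (k + 1))) :
    ((2 : ℝ≥0∞) ^ esum k)⁻¹ ≤ ∏ i ∈ Finset.range j, r (Nat.nth p i) := by
  classical
  obtain ⟨hr1, hr2⟩ := hr
  have hlt : ∀ i ∈ Finset.range j, Nat.nth p i < sparseSeq (k + 1) := fun i hi =>
    Nat.nth_lt_of_lt_count (lt_of_lt_of_le (Finset.mem_range.mp hi) hj)
  have hinj : Set.InjOn (Nat.nth p) (Finset.range j) :=
    fun a _ b _ h => (Nat.nth_injective hinf) h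
  rw [← Finset.prod_image hinj]
  set S : Finset ℕ := (Finset.range j).image (Nat.nth p) with hS
  have hSlt : ∀ n ∈ S, n < sparseSeq (k + 1) := by
    intro n hn; rw [hS, Finset.mem_image] at hn
    obtain ⟨i, hi, rfl⟩ := hn; exact hlt i hi
  set L : Finset ℕ := (Finset.range (k + 1)).filter (fun l => sparseSeq l ∈ S) with hL
  have hsub : L.image sparseSeq ⊆ S := by
    intro n hn; rw [hL, Finset.mem_image] at hn
    obtain ⟨l, hl, rfl⟩ := hn; exact (Finset.mem_filter.mp hl).2
  have hsplit : ∏ n ∈ S, r n = (∏ n ∈ S \ L.image sparseSeq, r n) * ∏ n ∈ L.image sparseSeq, r n :=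
    (Finset.prod_sdiff hsub).symm
  have hone : ∏ n ∈ S \ L.image sparseSeq, r n = 1 := by
    apply Finset.prod_eq_one
    intro n hn
    rw [Finset.mem_sdiff] at hn
    apply hr2
    intro l hnl
    apply hn.2
    rw [Finset.mem_image]
    refine ⟨l, ?_, hnl.symm⟩
    rw [hL, Finset.mem_filter, Finset.mem_range]
    have := hSlt n hn.1
    subst hnl
    exact ⟨sparseSeq_strictMono.lt_iff_lt.mp (by omega), hn.1⟩
  have himg : ∏ n ∈ L.image sparseSeq, r n = ∏ l ∈ L, ((2:ℝ≥0∞)⁻¹) ^ l := by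
    rw [Finset.prod_image (fun a _ b _ h => sparseSeq_strictMono.injective h)]
    exact Finset.prod_congr rfl fun l _ => by rw [hr1 l, ENNReal.inv_pow]
  rw [hsplit, hone, himg, one_mul]
  have hLsub : L ⊆ Finset.range (k + 1) := Finset.filter_subset _ _
  calc ((2 : ℝ≥0∞) ^ esum k)⁻¹ = ∏ l ∈ Finset.range (k + 1), ((2:ℝ≥0∞)⁻¹) ^ l := by
        rw [Finset.prod_pow_eq_pow_sum, ← ENNReal.inv_pow]; rfl
  _ = (∏ l ∈ Finset.range (k + 1) \ L, ((2:ℝ≥0∞)⁻¹) ^ l) * ∏ l ∈ L, ((2:ℝ≥0∞)⁻¹) ^ l :=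
        (Finset.prod_sdiff hLsub).symm
  _ ≤ 1 * ∏ l ∈ L, ((2:ℝ≥0∞)⁻¹) ^ l := by
        gcongr
        apply Finset.prod_le_one <;> intro i _
        · exact zero_le
        · exact pow_le_one' (by simp [ENNReal.inv_le_one, one_le_two]) _
  _ = ∏ l ∈ L, ((2:ℝ≥0∞)⁻¹) ^ l := one_mul _

lemma count_block_ge {p : ℕ → Prop} [DecidablePred p] {x : ℕ → Bool}
    (hpx : ∀ n, p n ↔ x n = true) {k : ℕ} (hk : 2 ≤ k)
    (hx : ∀ j < 2 ^ esum k, ∃ n ∈ grp k j, x n = true) :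
    Nat.count p (sparseSeq k) + 2 ^ esum k ≤ Nat.count p (sparseSeq (k + 1)) := by
  classical
  have hmono : sparseSeq k ≤ sparseSeq (k + 1) := (sparseSeq_strictMono (by omega)).le
  -- count over range splits
  have hsplit : Nat.count p (sparseSeq (k + 1)) =
      Nat.count p (sparseSeq k) + ((Finset.Ico (sparseSeq k) (sparseSeq (k+1))).filter p).card := by
    rw [Nat.count_eq_card_filter_range, Nat.count_eq_card_filter_range,
      Finset.range_eq_Ico,
      ← Finset.Ico_union_Ico_eq_Ico (Nat.zero_le _) hmono, Finset.filter_union,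
      Finset.card_union_of_disjoint]
    rw [Finset.range_eq_Ico]
    exact Finset.disjoint_filter_filter (p := p) (q := p) (Finset.Ico_disjoint_Ico_consecutive 0 (sparseSeq k) (sparseSeq (k+1)))
  rw [hsplit]
  have hcard : 2 ^ esum k ≤ ((Finset.Ico (sparseSeq k) (sparseSeq (k+1))).filter p).card := by
    have hM : 0 < esum k + k := by have := k_le_esum k; omega
    choose f hf1 hf2 using hx
    set F : ℕ → ℕ := fun j => if h : j < 2 ^ esum k then f j h else 0 with hF
    have hF1 : ∀ j (h : j < 2 ^ esum k), F j ∈ grp k j := fun j h => by simp [hF, h, hf1]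
    have hF2 : ∀ j (h : j < 2 ^ esum k), x (F j) = true := fun j h => by simp [hF, h, hf2]
    rw [← Finset.card_range (2 ^ esum k)]
    apply Finset.card_le_card_of_injOn F ?_ ?_
    · intro j hj
      rw [Finset.mem_coe, Finset.mem_range] at hj
      have h1 := hF1 j hj
      have h2 := hF2 j hj
      rw [Finset.mem_coe, Finset.mem_filter, Finset.mem_Ico]
      have := grp_subset hk hj _ h1
      exact ⟨⟨by omega, this.2⟩, (hpx _).mpr h2⟩
    · intro j1 hj1 j2 hj2 heq
      simp only [Finset.coe_range, Set.mem_Iio] at hj1 hj2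
      have h1 := hF1 j1 hj1
      have h1' := hF1 j2 hj2
      rw [grp, Finset.mem_Ico] at h1 h1'
      rw [heq] at h1
      have a1 : j1 * (esum k + k) < (j2 + 1) * (esum k + k) := by omega
      have a2 : j2 * (esum k + k) < (j1 + 1) * (esum k + k) := by omega
      have b1 := Nat.lt_of_mul_lt_mul_right a1
      have b2 := Nat.lt_of_mul_lt_mul_right a2
      omega
  omega

lemma det {r : ℕ → ℝ≥0∞} (hr : IsSparseJump r) (x : ℕ → Bool) (K : ℕ) (hK : 2 ≤ K)
    (hx : ∀ k, K ≤ k → ∀ j < 2 ^ esum k, ∃ n ∈ grp k j, x n = true) :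
    ∑' k, ∏ i ∈ Finset.range k, r (Nat.nth (fun n => x n = true) i) = ⊤ := by
  set p : ℕ → Prop := fun n => x n = true with hp
  haveI : DecidablePred p := fun n => decidable_of_iff (x n = true) (by rw [hp])
  have hpx : ∀ n, p n ↔ x n = true := fun n => by rw [hp]
  have hinf : (setOf p).Infinite := by
    apply Set.infinite_of_forall_exists_gt
    intro a
    have hKa : K ≤ max K (a + 1) := le_max_left _ _
    obtain ⟨n, hn1, hn2⟩ := hx (max K (a + 1)) hKa 0 (pow_pos (by norm_num) _)
    refine ⟨n, (hpx n).mpr hn2, ?_⟩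
    have h1 := (grp_subset (le_trans hK hKa) (pow_pos (by norm_num) _) _ hn1).1
    have h2 : max K (a + 1) ≤ sparseSeq (max K (a + 1)) := sparseSeq_strictMono.le_apply
    have h3 : a + 1 ≤ max K (a + 1) := le_max_right _ _
    omega
  set T : ℕ → ℕ := fun k => Nat.count p (sparseSeq k) with hT
  have hTmono : Monotone T := fun a b hab =>
    Nat.count_monotone p (sparseSeq_strictMono.monotone hab)
  have hblock : ∀ k, K ≤ k →
      1 ≤ ∑ j ∈ Finset.Ioc (T k) (T (k + 1)), ∏ i ∈ Finset.range j, r (Nat.nth p i) := by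
    intro k hKk
    have hcount : T k + 2 ^ esum k ≤ T (k + 1) :=
      count_block_ge hpx (le_trans hK hKk) (hx k hKk)
    calc (1 : ℝ≥0∞) = ((2 ^ esum k : ℕ) : ℝ≥0∞) * ((2 : ℝ≥0∞) ^ esum k)⁻¹ := by
          push_cast
          rw [ENNReal.mul_inv_cancel (by positivity) (by simp)]
    _ ≤ ((Finset.Ioc (T k) (T (k + 1))).card : ℝ≥0∞) * ((2 : ℝ≥0∞) ^ esum k)⁻¹ := by
          gcongr
          have hcount' : (2 : ℕ) ^ esum k ≤ (Finset.Ioc (T k) (T (k + 1))).card := by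
            rw [Nat.card_Ioc]; omega
          exact_mod_cast hcount'
    _ ≤ ∑ j ∈ Finset.Ioc (T k) (T (k + 1)), ∏ i ∈ Finset.range j, r (Nat.nth p i) := by
          rw [← nsmul_eq_mul, ← Finset.sum_const]
          apply Finset.sum_le_sum
          intro j hj
          exact prod_r_ge ⟨hr.1, hr.2⟩ hinf k j (Finset.mem_Ioc.mp hj).2
  have hpartial : ∀ N : ℕ, (N : ℝ≥0∞) ≤
      ∑ j ∈ Finset.Ioc (T K) (T (K + N)), ∏ i ∈ Finset.range j, r (Nat.nth p i) := by
    intro N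
    induction N with
    | zero => simp
    | succ N ih =>
      have h1 : T K ≤ T (K + N) := hTmono (by omega)
      have h2 : T (K + N) ≤ T (K + N + 1) := hTmono (by omega)
      rw [show K + (N + 1) = (K + N) + 1 by omega, ← Finset.Ioc_union_Ioc_eq_Ioc h1 h2,
        Finset.sum_union (by
          rw [Finset.disjoint_left]
          intro a ha hb
          rw [Finset.mem_Ioc] at ha hb
          omega)]
      push_cast
      exact add_le_add ih (hblock (K + N) (by omega))
  by_contra hne
  obtain ⟨n, hn⟩ := ENNReal.exists_nat_gt hne
  exact absurd (le_trans (hpartial n) (ENNReal.sum_le_tsum _)) (not_le.2 hn)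

end Aux

open MeasureTheory Filter Set ENNReal

/-- for the sparse product measure, for almost every `x` the series
`Σ_k C k x` of cocycle values along the forward geodesic of the least-deletion map diverges
to `+∞`, where `C k x = ∏_{i<k} r (nᵢ x)` and `n₀ x < n₁ x < ⋯` (given by `Nat.nth`) enumerates
`{n | x n = 1}`. -/
theorem sparse_cocycle_nonsummable
    (m : ℕ → Measure Bool) (hprob : ∀ n, IsProbabilityMeasure (m n))
    (hm : IsSparseMarginals m)
    (r : ℕ → ℝ≥0∞) (hr : IsSparseJump r)
    (μ : Measure (ℕ → Bool)) (hμ : IsProductMeasure μ m) :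
    ∀ᵐ x ∂μ,
      (∑' k : ℕ, ∏ i ∈ Finset.range k, r (Nat.nth (fun n => x n = true) i)) = ⊤ := by
  obtain ⟨hm1, hm2⟩ := hm
  have hfalse : ∀ n : ℕ, (∀ k : ℕ, n ≠ sparseSeq k) → m n {false} = 1 / 2 := by
    intro n hn
    have h1 := hm2 n hn
    have huniv : m n {false} + m n {true} = 1 := by
      rw [← measure_union (by simp) (measurableSet_singleton _)]
      have he : ({false} ∪ {true} : Set Bool) = Set.univ := by
        ext b; cases b <;> simp
      rw [he, measure_univ]
    rw [h1] at huniv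
    have h2 : 1 / 2 + m n {false} = 1 / 2 + 1 / 2 := by
      rw [add_comm (1/2 : ℝ≥0∞)]
      rw [huniv, ENNReal.add_halves]
    exact (ENNReal.add_right_inj (show (1/2 : ℝ≥0∞) ≠ ⊤ by norm_num)).mp h2
  -- measure of all-false events on groups
  have hZ : ∀ k j, 2 ≤ k → j < 2 ^ esum k →
      μ {x | ∀ n ∈ grp k j, x n = false} = (1 / 2 : ℝ≥0∞) ^ (esum k + k) := by
    intro k j hk hj
    have := hμ (grp k j) (fun _ => false)
    rw [this]
    have hcard : (grp k j).card = esum k + k := by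
      rw [grp, Nat.card_Ico]
      have : (j + 1) * (esum k + k) = j * (esum k + k) + (esum k + k) := by ring
      omega
    calc ∏ n ∈ grp k j, m n {false}
        = ∏ _n ∈ grp k j, (1 / 2 : ℝ≥0∞) := by
          apply Finset.prod_congr rfl
          intro n hn
          apply hfalse
          intro l hl
          have h12 := grp_subset hk hj n hn
          rw [hl] at h12
          have c1 := sparseSeq_strictMono.lt_iff_lt.mp h12.1
          have c2 := sparseSeq_strictMono.lt_iff_lt.mp h12.2
          omega
    _ = (1 / 2 : ℝ≥0∞) ^ (grp k j).card := Finset.prod_const _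
    _ = (1 / 2 : ℝ≥0∞) ^ (esum k + k) := by rw [hcard]
  -- bad events
  set B : ℕ → Set (ℕ → Bool) := fun k =>
    ⋃ j ∈ Finset.range (2 ^ esum (k + 2)), {x | ∀ n ∈ grp (k + 2) j, x n = false} with hB
  have hBle : ∀ k, μ (B k) ≤ ((2 : ℝ≥0∞)⁻¹) ^ k := by
    intro k
    calc μ (B k) ≤ ∑ j ∈ Finset.range (2 ^ esum (k + 2)),
          μ {x | ∀ n ∈ grp (k + 2) j, x n = false} := measure_biUnion_finset_le _ _
    _ = ∑ j ∈ Finset.range (2 ^ esum (k + 2)), (1 / 2 : ℝ≥0∞) ^ (esum (k + 2) + (k + 2)) := by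
          apply Finset.sum_congr rfl
          intro j hj
          exact hZ (k + 2) j (by omega) (Finset.mem_range.mp hj)
    _ = ((2 ^ esum (k + 2) : ℕ) : ℝ≥0∞) * (1 / 2 : ℝ≥0∞) ^ (esum (k + 2) + (k + 2)) := by
          rw [Finset.sum_const, Finset.card_range, nsmul_eq_mul]
    _ = ((2 : ℝ≥0∞)⁻¹) ^ (k + 2) := by
          push_cast
          rw [one_div, pow_add, ← mul_assoc, ← mul_pow,
            ENNReal.mul_inv_cancel (by norm_num) (by norm_num), one_pow, one_mul]
    _ ≤ ((2 : ℝ≥0∞)⁻¹) ^ k := by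
          rw [pow_add]
          exact mul_le_of_le_one_right zero_le (pow_le_one' (by
            simp [ENNReal.inv_le_one, one_le_two]) _)
  have hsum : ∑' k, μ (B k) ≠ ⊤ := by
    apply ne_top_of_le_ne_top (b := ∑' k, ((2 : ℝ≥0∞)⁻¹) ^ k)
    · rw [ENNReal.tsum_geometric]
      apply ENNReal.inv_ne_top.mpr
      rw [ENNReal.one_sub_inv_two]
      simp
    · exact ENNReal.tsum_le_tsum hBle
  have hBC := measure_limsup_atTop_eq_zero (μ := μ) hsum
  have hae : ∀ᵐ x ∂μ, x ∉ limsup B atTop :=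
    MeasureTheory.measure_eq_zero_iff_ae_notMem.mp hBC
  filter_upwards [hae] with x hx
  rw [mem_limsup_iff_frequently_mem, Filter.not_frequently] at hx
  rw [Filter.eventually_atTop] at hx
  obtain ⟨K, hK⟩ := hx
  apply det hr x (K + 2) (by omega)
  intro k hk j hj
  have hK' := hK (k - 2) (by omega)
  rw [hB] at hK'
  simp only [Set.mem_iUnion, not_exists, Set.mem_setOf_eq] at hK'
  have hk2 : k - 2 + 2 = k := by omega
  rw [hk2] at hK'
  have := hK' j (Finset.mem_range.mpr hj)
  push_neg at this
  obtain ⟨n, hn1, hn2⟩ := this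
  exact ⟨n, hn1, by simpa using hn2⟩
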